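/- Let B be a Prüfer domain with fraction field L, i.e., an integral domain such that for every prime ideal q of B the localization B_q, viewed as a subring of L, is a valuation ring of L. Let R be a valuation subring of L with B ⊆ R and R ≠ L (so the corresponding valuation is nontrivial), and let m_R denote the maximal ideal of R. Set p := m_R ∩ B. Then p is a nonzero prime ideal of B and R = B_p as subrings of L. -/

import Mathlib

/-- Let `B` be a Prüfer domain with fraction field `L`: for every prime ideal `q`
of `B`, the localization `B_q = {a/b | b ∉ q}` inside `L` is a valuation ring of
`L`. If `R` is a valuation subring of `L` containing `B` with `R ≠ L` (so the
corresponding valuation is nontrivial) and `m_R` is its maximal ideal, then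
`p = m_R ∩ B` is a nonzero prime ideal of `B` and `R = B_p` inside `L`. -/
theorem valuationSubring_eq_localization_of_prufer
    (B L : Type*) [CommRing B] [IsDomain B] [Field L] [Algebra B L]
    [IsFractionRing B L]
    (hPrufer : ∀ q : Ideal B, q.IsPrime → ∀ x : L, x ≠ 0 →
      ((∃ a b : B, b ∉ q ∧ x * algebraMap B L b = algebraMap B L a) ∨
       (∃ a b : B, b ∉ q ∧ x⁻¹ * algebraMap B L b = algebraMap B L a)))
    (R : ValuationSubring L) (hBR : ∀ b : B, algebraMap B L b ∈ R)
    (hR : R.toSubring ≠ ⊤)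
    (p : Ideal B)
    (hp : p = (IsLocalRing.maximalIdeal R).comap
      ((algebraMap B L).codRestrict R.toSubring hBR)) :
    p ≠ ⊥ ∧ p.IsPrime ∧
      ∀ x : L, x ∈ R ↔ ∃ a b : B, b ∉ p ∧ x * algebraMap B L b = algebraMap B L a := by
  set f := (algebraMap B L).codRestrict R.toSubring hBR with hf
  have hfcoe : ∀ b : B, ((f b : R) : L) = algebraMap B L b := fun b => rfl
  have hprime : p.IsPrime := by
    rw [hp]; exact Ideal.IsPrime.comap f
  have hmem : ∀ b : B, b ∉ p ↔ IsUnit (f b) := by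
    intro b
    rw [hp, Ideal.mem_comap, IsLocalRing.mem_maximalIdeal, mem_nonunits_iff, not_not]
  have hmemmax : ∀ (y : L) (hy : y ∈ R), y⁻¹ ∉ R →
      (⟨y, hy⟩ : R) ∈ IsLocalRing.maximalIdeal R := by
    intro y hy hyi
    rw [IsLocalRing.mem_maximalIdeal, mem_nonunits_iff]
    intro hu
    obtain ⟨v, hv⟩ := isUnit_iff_exists_inv.mp hu
    have hvL : y * (v : L) = 1 := congrArg (fun z : R => (z : L)) hv
    have hy0 : y ≠ 0 := by rintro rfl; simp at hvL
    have : (v : L) = y⁻¹ := by field_simp [hy0] at hvL ⊢; linear_combination hvL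
    exact hyi (this ▸ v.2)
  have hnontop : ∃ x : L, x ∉ R := by
    by_contra h
    push_neg at h
    exact hR (by ext x; simp [h x])
  refine ⟨?_, hprime, ?_⟩
  · obtain ⟨x, hx⟩ := hnontop
    have hx0 : x ≠ 0 := fun h => hx (h ▸ R.zero_mem)
    have hxinv : x⁻¹ ∈ R := (R.mem_or_inv_mem x).resolve_left hx
    have hnu : (⟨x⁻¹, hxinv⟩ : R) ∈ IsLocalRing.maximalIdeal R := by
      apply hmemmax
      rwa [inv_inv]
    obtain ⟨⟨a, b⟩, hab⟩ := IsLocalization.surj (nonZeroDivisors B) x⁻¹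
    have ha0 : a ≠ 0 := by
      rintro rfl
      simp only [map_zero] at hab
      have hb0 : algebraMap B L b ≠ 0 := by
        exact IsFractionRing.to_map_ne_zero_of_mem_nonZeroDivisors b.2
      exact (inv_ne_zero hx0) (by
        rcases mul_eq_zero.mp hab with h | h
        · exact h
        · exact absurd h hb0)
    have hap : a ∈ p := by
      rw [hp, Ideal.mem_comap]
      have : f a = (⟨x⁻¹, hxinv⟩ : R) * f b := by
        ext
        simp [hfcoe, hab.symm]
      exact this ▸ Ideal.mul_mem_right _ _ hnu
    exact fun h => ha0 (by rwa [h, Ideal.mem_bot] at hap)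
  · intro x
    constructor
    · intro hxR
      by_cases hx0 : x = 0
      · exact ⟨0, 1, hprime.ne_top ∘ (Ideal.eq_top_iff_one p).mpr, by simp [hx0]⟩
      rcases hPrufer p hprime x hx0 with ⟨a, b, hb, hxab⟩ | ⟨a, b, hb, hxab⟩
      · exact ⟨a, b, hb, hxab⟩
      · -- x⁻¹ * b = a,  so  b = x * a ; claim a ∉ p
        have hba : algebraMap B L b = x * algebraMap B L a := by
          have := congrArg (x * ·) hxab
          simpa [mul_comm, mul_assoc, mul_left_comm, hx0, mul_inv_cancel₀] using this
        refine ⟨b, a, ?_, hba.symm⟩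
        intro hapmem
        apply hb
        rw [hp, Ideal.mem_comap] at hapmem ⊢
        have : f b = (⟨x, hxR⟩ : R) * f a := by
          ext
          simp [hfcoe, hba]
        exact this ▸ Ideal.mul_mem_left _ _ hapmem
    · rintro ⟨a, b, hb, hxab⟩
      obtain ⟨v, hv⟩ := isUnit_iff_exists_inv.mp ((hmem b).mp hb)
      have hvL : algebraMap B L b * (v : L) = 1 := congrArg (fun z : R => (z : L)) hv
      have : x = algebraMap B L a * (v : L) := by
        calc x = x * (algebraMap B L b * (v : L)) := by rw [hvL, mul_one]
        _ = (x * algebraMap B L b) * (v : L) := by ring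
        _ = algebraMap B L a * (v : L) := by rw [hxab]
      rw [this]
      exact R.mul_mem _ _ (hBR a) v.2
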